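/- If the parameters of the hyperchaotic Qi system u̇ = -δu + λz + xy, ẋ = α(y-x) + yz, ẏ = β(x+y) - xz, ż = -γz - εu + xy satisfy α + β = 0 and γ + ε + λ = δ, then I1 = (z - u)e^{(γ+λ)t} and I2 = (x² + y²)e^{2αt} are time-dependent first integrals. -/

import Mathlib

open Real

/-- If the parameters of the hyperchaotic Qi system u̇ = -δu + λz + xy,
ẋ = α(y-x) + yz, ẏ = β(x+y) - xz, ż = -γz - εu + xy satisfy α + β = 0 and
γ + ε + λ = δ, then I₁ = (z - u)e^{(γ+λ)t} and I₂ = (x² + y²)e^{2αt} are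
time-dependent first integrals. -/
theorem qi_time_dependent_first_integrals
    (α β γ δ ε lam : ℝ) (h₁ : α + β = 0) (h₂ : γ + ε + lam = δ)
    (u x y z : ℝ → ℝ)
    (hu : ∀ t, HasDerivAt u (-δ * u t + lam * z t + x t * y t) t)
    (hx : ∀ t, HasDerivAt x (α * (y t - x t) + y t * z t) t)
    (hy : ∀ t, HasDerivAt y (β * (x t + y t) - x t * z t) t)
    (hz : ∀ t, HasDerivAt z (-γ * z t - ε * u t + x t * y t) t) :
    (∀ t, HasDerivAt (fun t => (z t - u t) * exp ((γ + lam) * t)) 0 t) ∧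
    (∀ t, HasDerivAt (fun t => ((x t) ^ 2 + (y t) ^ 2) * exp (2 * α * t)) 0 t) := by
  constructor
  · intro t
    have he : HasDerivAt (fun t : ℝ => exp ((γ + lam) * t)) ((γ + lam) * exp ((γ + lam) * t)) t := by
      simpa [mul_comm] using ((hasDerivAt_id t).const_mul (γ + lam)).exp
    have h := (((hz t).sub (hu t)).mul he)
    refine h.congr_deriv ?_
    simp only [Pi.add_apply, Pi.sub_apply, Pi.pow_apply]
    have hβ : β = -α := by linarith
    have hδ : δ = γ + ε + lam := h₂.symm
    rw [hδ]; ring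
  · intro t
    have he : HasDerivAt (fun t : ℝ => exp (2 * α * t)) (2 * α * exp (2 * α * t)) t := by
      simpa [mul_comm] using ((hasDerivAt_id t).const_mul (2 * α)).exp
    have h := ((((hx t).pow 2).add ((hy t).pow 2)).mul he)
    refine h.congr_deriv ?_
    simp only [Pi.add_apply, Pi.sub_apply, Pi.pow_apply]
    have hβ : β = -α := by linarith
    rw [hβ]; ring
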